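/- Let X and Y be edge-disjoint matchings, each with at least one edge, of sizes x and y respectively. Suppose Y has exactly y₁ edges that are adjacent to exactly one edge of X and exactly y₂ edges that are adjacent to exactly two edges of X. Let ℓ_Y be an ordering of Y in which the y₂ edges adjacent to two edges of X receive the largest labels. Then there is an ordering ℓ_X of X such that ms(ℓ_X ∨ ℓ_Y) ≥ min{ x, x + y − y₁ − 2y₂ }. -/

import Mathlib

open SimpleGraph

/-- Two edges are adjacent if they are distinct and share a vertex. -/
def EdgesAdj {V : Type*} (e e' : Sym2 V) : Prop :=
  e ≠ e' ∧ ∃ v : V, v ∈ e ∧ v ∈ e'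

/-- `ms` of an ordering of a graph, the ordering being given as the list of edges
in increasing label order: the largest `s ∈ {1,…,m}` such that any ordered pair of
adjacent edges `(e,e')` with `ℓ(e) < ℓ(e')` has forward distance at least `s`. -/
noncomputable def msList {V : Type*} (L : List (Sym2 V)) : ℕ :=
  sSup {s | 1 ≤ s ∧ s ≤ L.length ∧ ∀ i j e e', i < j →
    L[i]? = some e → L[j]? = some e' → EdgesAdj e e' → s ≤ j - i}

/-- `cms` of an ordering of a graph: the largest `s ∈ {1,…,m}` such that every pair of
adjacent edges is at cyclic distance at least `s`. -/
noncomputable def cmsList {V : Type*} (L : List (Sym2 V)) : ℕ :=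
  sSup {s | 1 ≤ s ∧ s ≤ L.length ∧ ∀ i j e e', i < j →
    L[i]? = some e → L[j]? = some e' → EdgesAdj e e' →
    s ≤ min (j - i) (L.length - (j - i))}

/-- `L` is an ordering of `G`: it lists every edge of `G` exactly once. -/
def IsOrdering {V : Type*} (G : SimpleGraph V) (L : List (Sym2 V)) : Prop :=
  L.Nodup ∧ ∀ e, e ∈ L ↔ e ∈ G.edgeSet

/-- Cyclic matching sequenceability of a graph: the maximum of `cmsList` over orderings. -/
noncomputable def cms {V : Type*} (G : SimpleGraph V) : ℕ :=
  sSup {k | ∃ L, IsOrdering G L ∧ cmsList L = k}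

/-- Number of edges of a graph. -/
noncomputable def numEdges {V : Type*} (G : SimpleGraph V) : ℕ :=
  Nat.card G.edgeSet

/-- The chromatic index: the least number of colours in a proper edge colouring. -/
noncomputable def chromaticIndex {V : Type*} (G : SimpleGraph V) : ℕ :=
  sInf {c | ∃ f : G.edgeSet → Fin c, ∀ e e' : G.edgeSet, EdgesAdj e.1 e'.1 → f e ≠ f e'}

/-- The edge set of `G` forms a matching (no two distinct edges share a vertex). -/
def IsMatchingGraph {V : Type*} (G : SimpleGraph V) : Prop :=
  ∀ e ∈ G.edgeSet, ∀ e' ∈ G.edgeSet, ¬ EdgesAdj e e'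

/-- `G` is regular of degree `d`. -/
def IsRegularGraph {V : Type*} (G : SimpleGraph V) (d : ℕ) : Prop :=
  ∀ v : V, Nat.card (G.neighborSet v) = d

/-- A finite set of edges of `G` forming a matching. -/
def IsMatchingSet {V : Type*} (G : SimpleGraph V) (M : Finset (Sym2 V)) : Prop :=
  ↑M ⊆ G.edgeSet ∧ ∀ e ∈ M, ∀ e' ∈ M, ¬ EdgesAdj e e'

/-- The matching number of a graph. -/
noncomputable def matchingNumber {V : Type*} (G : SimpleGraph V) : ℕ :=
  sSup {k | ∃ M : Finset (Sym2 V), IsMatchingSet G M ∧ M.card = k}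
lemma edgesAdj_comm {V : Type*} {e f : Sym2 V} (h : EdgesAdj e f) : EdgesAdj f e :=
  ⟨h.1.symm, h.2.imp fun v hv => ⟨hv.2, hv.1⟩⟩

lemma natCard_adj_le_two {V : Type*} [Fintype V] (X : SimpleGraph V) (hX : IsMatchingGraph X)
    (e : Sym2 V) : Nat.card {f : Sym2 V // f ∈ X.edgeSet ∧ EdgesAdj e f} ≤ 2 := by
  classical
  induction e using Sym2.ind with
  | _ u v =>
    have hinj : Function.Injective
        (fun f : {f : Sym2 V // f ∈ X.edgeSet ∧ EdgesAdj s(u,v) f} => decide (u ∈ f.1)) := by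
      rintro ⟨f, hfX, hfadj⟩ ⟨g, hgX, hgadj⟩ hfg
      simp only [decide_eq_decide] at hfg
      have key : ∀ w, w ∈ f → w ∈ g → f = g := by
        intro w hwf hwg
        by_contra hne
        exact hX f hfX g hgX ⟨hne, w, hwf, hwg⟩
      have : f = g := by
        by_cases hu : u ∈ f
        · exact key u hu (hfg.mp hu)
        · obtain ⟨w, hwe, hwf⟩ := hfadj.2
          rcases Sym2.mem_iff.mp hwe with rfl | rfl
          · exact absurd hwf hu
          · obtain ⟨w', hwe', hwg⟩ := hgadj.2
            rcases Sym2.mem_iff.mp hwe' with rfl | rfl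
            · exact absurd (hfg.mpr hwg) hu
            · exact key _ hwf hwg
      exact Subtype.ext this
    calc Nat.card {f : Sym2 V // f ∈ X.edgeSet ∧ EdgesAdj s(u,v) f}
        ≤ Nat.card Bool := Nat.card_le_card_of_injective _ hinj
      _ = 2 := by simp [Nat.card_eq_fintype_card]

lemma le_msList {V : Type*} (L : List (Sym2 V)) (M : ℕ) (h1 : 1 ≤ M) (h2 : M ≤ L.length)
    (h3 : ∀ i j e e', i < j → L[i]? = some e → L[j]? = some e' → EdgesAdj e e' → M ≤ j - i) :
    M ≤ msList L :=
  le_csSup ⟨L.length, fun _ hs => hs.2.1⟩ ⟨h1, h2, h3⟩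

/-- Lemma: let `X` and `Y` be edge-disjoint matchings of sizes `x` and `y`, where `Y` has
exactly `y₁` edges adjacent to exactly one edge of `X` and exactly `y₂` edges adjacent to
exactly two edges of `X`.  If `ℓ_Y` is an ordering of `Y` in which the `y₂` edges adjacent
to two edges of `X` are the last to occur, then there is an ordering `ℓ_X` of `X` with
`ms(ℓ_X ∨ ℓ_Y) ≥ min{x, x + y - y₁ - 2y₂}`. -/
theorem exists_ordering_msList_ge_min {V : Type*} [Fintype V] (X Y : SimpleGraph V)
    (x y y1 y2 : ℕ) (LY : List (Sym2 V))
    (hX : IsMatchingGraph X) (hY : IsMatchingGraph Y)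
    (hdisj : Disjoint X.edgeSet Y.edgeSet)
    (hXne : X.edgeSet.Nonempty) (hYne : Y.edgeSet.Nonempty)
    (hx : numEdges X = x) (hy : numEdges Y = y)
    (hy1 : Nat.card {e : Sym2 V // e ∈ Y.edgeSet ∧
      Nat.card {f : Sym2 V // f ∈ X.edgeSet ∧ EdgesAdj e f} = 1} = y1)
    (hy2 : Nat.card {e : Sym2 V // e ∈ Y.edgeSet ∧
      Nat.card {f : Sym2 V // f ∈ X.edgeSet ∧ EdgesAdj e f} = 2} = y2)
    (hLY : IsOrdering Y LY)
    (hlast : ∀ (i j : ℕ) (e e' : Sym2 V), i < j → LY[i]? = some e → LY[j]? = some e' →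
      Nat.card {f : Sym2 V // f ∈ X.edgeSet ∧ EdgesAdj e f} = 2 →
      Nat.card {f : Sym2 V // f ∈ X.edgeSet ∧ EdgesAdj e' f} = 2) :
    ∃ LX : List (Sym2 V), IsOrdering X LX ∧
      min (x : ℤ) ((x : ℤ) + (y : ℤ) - (y1 : ℤ) - 2 * (y2 : ℤ))
        ≤ (msList (LX ++ LY) : ℤ) := by
  classical
  haveI : Fintype (Sym2 V) := Fintype.ofFinite _
  obtain ⟨e₀, he₀⟩ := hYne
  -- the key function: first position in LY of an adjacent edge
  set key : Sym2 V → ℕ := fun e => LY.findIdx (fun f => decide (EdgesAdj e f)) with hkeydef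
  have hkey_adj : ∀ e : Sym2 V, ∀ h : key e < LY.length, EdgesAdj e (LY[key e]'h) := by
    intro e h
    exact of_decide_eq_true (List.findIdx_getElem (w := h))
  have hkey_le : ∀ (e : Sym2 V) (k : ℕ) (hk : k < LY.length), EdgesAdj e (LY[k]'hk) →
      key e ≤ k := by
    intro e k hk hadj
    by_contra hlt
    push_neg at hlt
    have := List.not_of_lt_findIdx (p := fun f => decide (EdgesAdj e f)) (xs := LY) hlt
    simp only [decide_eq_false_iff_not] at this
    exact this hadj
  -- the ordering of X
  set L0 : List (Sym2 V) := X.edgeSet.toFinset.toList with hL0def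
  set LX : List (Sym2 V) := L0.mergeSort (fun a b => decide (key a ≤ key b)) with hLXdef
  have hperm : LX.Perm L0 := List.mergeSort_perm _ _
  have hLXnodup : LX.Nodup := hperm.nodup_iff.mpr (Finset.nodup_toList _)
  have hLXmem : ∀ e, e ∈ LX ↔ e ∈ X.edgeSet := by
    intro e
    rw [hperm.mem_iff, hL0def, Finset.mem_toList, Set.mem_toFinset]
  have hsorted : List.Pairwise (fun a b => key a ≤ key b) LX := by
    have h := List.pairwise_mergeSort (le := fun a b => decide (key a ≤ key b))
      (fun a b c hab hbc => by
        simp only [decide_eq_true_eq] at *; omega)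
      (fun a b => by
        simp only [Bool.or_eq_true, decide_eq_true_eq]; omega) L0
    exact h.imp (fun hab => of_decide_eq_true hab)
  have hxLen : LX.length = x := by
    rw [hperm.length_eq, hL0def, Finset.length_toList, Set.toFinset_card,
      ← Nat.card_eq_fintype_card]
    exact hx
  have hyLen : LY.length = y := by
    have h1 : LY.toFinset = Y.edgeSet.toFinset := by
      ext f; simp [List.mem_toFinset, hLY.2, Set.mem_toFinset]
    calc LY.length = LY.toFinset.card := (List.toFinset_card_of_nodup hLY.1).symm
      _ = Y.edgeSet.toFinset.card := by rw [h1]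
      _ = Fintype.card Y.edgeSet := Set.toFinset_card _
      _ = Nat.card Y.edgeSet := Nat.card_eq_fintype_card.symm
      _ = y := hy
  -- the counting function
  set Bk : ℕ → Finset (Sym2 V) :=
    fun k => {f : Sym2 V | f ∈ X.edgeSet ∧ EdgesAdj (LY.getD k e₀) f}.toFinset with hBkdef
  set c : ℕ → ℕ := fun k => (Bk k).card with hcdef
  have hc : ∀ k, c k = Nat.card {f : Sym2 V // f ∈ X.edgeSet ∧ EdgesAdj (LY.getD k e₀) f} := by
    intro k
    show ({f : Sym2 V | f ∈ X.edgeSet ∧ EdgesAdj (LY.getD k e₀) f}.toFinset).card = _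
    rw [Set.toFinset_card, ← Nat.card_eq_fintype_card]
    rfl
  have hc2 : ∀ k, c k ≤ 2 := by
    intro k
    rw [hc k]
    exact natCard_adj_le_two X hX _
  -- counts of c k = i
  have hcount : ∀ i yi : ℕ, Nat.card {e : Sym2 V // e ∈ Y.edgeSet ∧
      Nat.card {f : Sym2 V // f ∈ X.edgeSet ∧ EdgesAdj e f} = i} = yi →
      ((Finset.range y).filter (fun k => c k = i)).card ≤ yi := by
    intro i yi hyi
    have := Finset.card_le_card_of_injOn (fun k => LY.getD k e₀)
      (t := {e : Sym2 V | e ∈ Y.edgeSet ∧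
        Nat.card {f : Sym2 V // f ∈ X.edgeSet ∧ EdgesAdj e f} = i}.toFinset)
      (s := (Finset.range y).filter (fun k => c k = i)) ?_ ?_
    · refine this.trans ?_
      rw [Set.toFinset_card, ← Nat.card_eq_fintype_card]
      exact le_of_eq hyi
    · intro k hk
      simp only [Finset.mem_coe, Finset.mem_filter, Finset.mem_range] at hk
      obtain ⟨hky, hcki⟩ := hk
      have hklt : k < LY.length := by omega
      simp only [Finset.mem_coe, Set.mem_toFinset, Set.mem_setOf_eq]
      constructor
      · rw [List.getD_eq_getElem _ _ hklt]
        exact (hLY.2 _).mp (List.getElem_mem hklt)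
      · rw [← hc k]; exact hcki
    · intro k hk k' hk' hkk'
      simp only [Finset.coe_filter, Set.mem_setOf_eq, Finset.mem_range] at hk hk'
      simp only at hkk'
      have hklt : k < LY.length := by omega
      have hklt' : k' < LY.length := by omega
      rw [List.getD_eq_getElem _ _ hklt, List.getD_eq_getElem _ _ hklt'] at hkk'
      exact (hLY.1.getElem_inj_iff).mp hkk'
  -- suffix structure: c k = 2 forces k ≥ y - y2
  have hsuffix : ∀ k, k < y → c k = 2 → y ≤ k + y2 := by
    intro k hky hck2
    have hsub : Finset.Ico k y ⊆ (Finset.range y).filter (fun k => c k = 2) := by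
      intro j hj
      simp only [Finset.mem_Ico] at hj
      simp only [Finset.mem_filter, Finset.mem_range]
      refine ⟨hj.2, ?_⟩
      rcases eq_or_lt_of_le hj.1 with rfl | hkj
      · exact hck2
      · have hjlt : j < LY.length := by omega
        have hklt : k < LY.length := by omega
        have := hlast k j (LY[k]'hklt) (LY[j]'hjlt) hkj
          (List.getElem?_eq_getElem hklt) (List.getElem?_eq_getElem hjlt) ?_
        · rw [hc j, List.getD_eq_getElem _ _ hjlt]; exact this
        · rw [hc k, List.getD_eq_getElem _ _ hklt] at hck2; exact hck2
    have h1 := Finset.card_le_card hsub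
    rw [Nat.card_Ico] at h1
    have h2 := hcount 2 y2 hy2
    omega
  -- setting M
  set M : ℕ := min x (x + y - (y1 + 2 * y2)) with hMdef
  -- the key summation bound
  have hsum : ∀ K, K < y → (∑ k ∈ Finset.range (K + 1), c k) + M ≤ x + K + 1 := by
    intro K hKy
    set n : ℕ := min (K + 1) (y - y2) with hndef
    have hc1 : ∀ k, k < n → c k ≤ 1 := by
      intro k hkn
      have hky : k < y := by omega
      have := hc2 k
      rcases Nat.lt_or_ge (c k) 2 with h | h
      · omega
      · have : c k = 2 := by omega
        have := hsuffix k hky this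
        omega
    have hsplit : Finset.range (K + 1) = Finset.range n ∪ Finset.Ico n (K + 1) := by
      rw [Finset.range_eq_Ico, ← Finset.Ico_union_Ico_eq_Ico (Nat.zero_le n) (by omega), ← Finset.range_eq_Ico]
    have hA : (∑ k ∈ Finset.range n, c k) ≤ min n y1 := by
      refine le_min ?_ ?_
      · calc (∑ k ∈ Finset.range n, c k) ≤ ∑ _k ∈ Finset.range n, 1 :=
            Finset.sum_le_sum (fun k hk => hc1 k (Finset.mem_range.mp hk))
          _ = n := by simp
      · have heq : (∑ k ∈ Finset.range n, c k)
            ≤ ((Finset.range n).filter (fun k => c k = 1)).card := by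
          rw [← Finset.sum_filter_add_sum_filter_not (Finset.range n) (fun k => c k = 1) c]
          have hz : (∑ k ∈ (Finset.range n).filter (fun k => ¬ c k = 1), c k) = 0 := by
            refine Finset.sum_eq_zero ?_
            intro k hk
            simp only [Finset.mem_filter, Finset.mem_range] at hk
            have := hc1 k hk.1
            omega
          have ho : (∑ k ∈ (Finset.range n).filter (fun k => c k = 1), c k)
              = ((Finset.range n).filter (fun k => c k = 1)).card := by
            rw [Finset.card_eq_sum_ones]
            exact Finset.sum_congr rfl (fun k hk => (Finset.mem_filter.mp hk).2)
          omega
        refine heq.trans ?_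
        refine (Finset.card_le_card ?_).trans (hcount 1 y1 hy1)
        refine Finset.filter_subset_filter _ ?_
        intro k hk
        simp only [Finset.mem_range] at *
        omega
    have hB : (∑ k ∈ Finset.Ico n (K + 1), c k) ≤ 2 * (K + 1 - n) := by
      calc (∑ k ∈ Finset.Ico n (K + 1), c k) ≤ ∑ _k ∈ Finset.Ico n (K + 1), 2 :=
          Finset.sum_le_sum (fun k _ => hc2 k)
        _ = 2 * (K + 1 - n) := by rw [Finset.sum_const, Nat.card_Ico]; ring
    have hdisjU : Disjoint (Finset.range n) (Finset.Ico n (K + 1)) := by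
      rw [Finset.range_eq_Ico]
      exact Finset.Ico_disjoint_Ico_consecutive 0 n (K + 1)
    have htot : (∑ k ∈ Finset.range (K + 1), c k)
        = (∑ k ∈ Finset.range n, c k) + (∑ k ∈ Finset.Ico n (K + 1), c k) := by
      rw [hsplit, Finset.sum_union hdisjU]
    have hA1 : (∑ k ∈ Finset.range n, c k) ≤ n := (hA.trans (min_le_left _ _))
    have hA2 : (∑ k ∈ Finset.range n, c k) ≤ y1 := (hA.trans (min_le_right _ _))
    -- bound by 2x via double counting
    have hBsub : ∀ k, Bk k ⊆ X.edgeSet.toFinset := by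
      intro k f hf
      have : f ∈ X.edgeSet ∧ EdgesAdj (LY.getD k e₀) f := by
        rw [hBkdef] at hf; simpa using hf
      simpa using this.1
    have hmem2 : ∀ f : Sym2 V,
        ((Finset.range (K + 1)).filter (fun k => f ∈ Bk k)).card ≤ 2 := by
      intro f
      have hle : Nat.card {g : Sym2 V // g ∈ Y.edgeSet ∧ EdgesAdj f g} ≤ 2 :=
        natCard_adj_le_two Y hY f
      have hcard := Finset.card_le_card_of_injOn (fun k => LY.getD k e₀)
        (s := (Finset.range (K + 1)).filter (fun k => f ∈ Bk k))
        (t := {g : Sym2 V | g ∈ Y.edgeSet ∧ EdgesAdj f g}.toFinset) ?_ ?_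
      · refine hcard.trans ?_
        rw [Set.toFinset_card, ← Nat.card_eq_fintype_card]
        exact hle
      · intro k hk
        simp only [Finset.mem_coe, Finset.mem_filter, Finset.mem_range] at hk
        have hkl : k < LY.length := by omega
        have hmem : f ∈ X.edgeSet ∧ EdgesAdj (LY.getD k e₀) f := by
          have := hk.2; rw [hBkdef] at this; simpa using this
        simp only [Finset.mem_coe, Set.mem_toFinset, Set.mem_setOf_eq]
        rw [List.getD_eq_getElem _ _ hkl] at hmem ⊢
        exact ⟨(hLY.2 _).mp (List.getElem_mem hkl), edgesAdj_comm hmem.2⟩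
      · intro k hk k' hk' hkk'
        simp only [Finset.coe_filter, Finset.mem_range, Set.mem_setOf_eq] at hk hk'
        simp only at hkk'
        have hl1 : k < LY.length := by omega
        have hl2 : k' < LY.length := by omega
        rw [List.getD_eq_getElem _ _ hl1, List.getD_eq_getElem _ _ hl2] at hkk'
        exact hLY.1.getElem_inj_iff.mp hkk'
    have hxcard : X.edgeSet.toFinset.card = x := by
      rw [Set.toFinset_card, ← Nat.card_eq_fintype_card]; exact hx
    have hswap : (∑ k ∈ Finset.range (K + 1), c k)
        = ∑ f ∈ X.edgeSet.toFinset,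
            ((Finset.range (K + 1)).filter (fun k => f ∈ Bk k)).card := by
      have h1 : ∀ k, c k = ∑ f ∈ X.edgeSet.toFinset, (if f ∈ Bk k then 1 else 0) := by
        intro k
        have : c k = (X.edgeSet.toFinset.filter (fun f => f ∈ Bk k)).card := by
          rw [hcdef]
          simp only []
          congr 1
          ext f
          simp only [Finset.mem_filter]
          exact ⟨fun hf => ⟨hBsub k hf, hf⟩, fun h => h.2⟩
        rw [this, Finset.card_filter]
      calc (∑ k ∈ Finset.range (K + 1), c k)
          = ∑ k ∈ Finset.range (K + 1), ∑ f ∈ X.edgeSet.toFinset,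
              (if f ∈ Bk k then 1 else 0) := Finset.sum_congr rfl (fun k _ => h1 k)
        _ = ∑ f ∈ X.edgeSet.toFinset, ∑ k ∈ Finset.range (K + 1),
              (if f ∈ Bk k then 1 else 0) := Finset.sum_comm
        _ = ∑ f ∈ X.edgeSet.toFinset,
              ((Finset.range (K + 1)).filter (fun k => f ∈ Bk k)).card :=
            Finset.sum_congr rfl (fun f _ => (Finset.card_filter _ _).symm)
    have hS2x : (∑ k ∈ Finset.range (K + 1), c k) ≤ 2 * x := by
      rw [hswap]
      calc (∑ f ∈ X.edgeSet.toFinset,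
              ((Finset.range (K + 1)).filter (fun k => f ∈ Bk k)).card)
          ≤ ∑ _f ∈ X.edgeSet.toFinset, 2 := Finset.sum_le_sum (fun f _ => hmem2 f)
        _ = 2 * x := by rw [Finset.sum_const, hxcard]; ring
    have hS2K : (∑ k ∈ Finset.range (K + 1), c k) ≤ 2 * (K + 1) := by
      calc (∑ k ∈ Finset.range (K + 1), c k) ≤ ∑ _k ∈ Finset.range (K + 1), 2 :=
          Finset.sum_le_sum (fun k _ => hc2 k)
        _ = 2 * (K + 1) := by rw [Finset.sum_const, Finset.card_range]; ring
    have h1 : M ≤ x := min_le_left _ _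
    have h2 : M ≤ x + y - (y1 + 2 * y2) := min_le_right _ _
    have h3 : n ≤ K + 1 := min_le_left _ _
    have h4 : n ≤ y - y2 := min_le_right _ _
    have h5 : K + 1 ≤ n ∨ y - y2 ≤ n := by
      rcases le_total (K + 1) (y - y2) with h | h
      · left; rw [hndef]; omega
      · right; rw [hndef]; omega
    clear_value n M
    clear hndef hMdef hA hc hc2 hc1 hcount hsuffix
    omega
  refine ⟨LX, ⟨hLXnodup, hLXmem⟩, ?_⟩
  -- main bound as naturals
  have hmain : M ≤ msList (LX ++ LY) := by
    rcases Nat.eq_zero_or_pos M with hM0 | hM1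
    · omega
    refine le_msList _ _ hM1 ?_ ?_
    · have hlen : (LX ++ LY).length = x + y := by
        simp only [List.length_append, hxLen, hyLen]
      clear_value M
      omega
    · intro i j e e' hij hie hje hadj
      have hjlen : j < LX.length + LY.length := by
        obtain ⟨h, -⟩ := List.getElem?_eq_some_iff.mp hje
        have hlen2 : (LX ++ LY).length = LX.length + LY.length := List.length_append
        omega
      -- case analysis on positions
      rcases Nat.lt_or_ge j LX.length with hjX | hjY
      · -- both in X : impossible
        exfalso
        have hiX : i < LX.length := by omega
        rw [List.getElem?_append_left hiX, List.getElem?_eq_getElem hiX] at hie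
        rw [List.getElem?_append_left hjX, List.getElem?_eq_getElem hjX] at hje
        have he : e ∈ X.edgeSet := by
          rw [← Option.some_inj.mp hie]; exact (hLXmem _).mp (List.getElem_mem hiX)
        have he' : e' ∈ X.edgeSet := by
          rw [← Option.some_inj.mp hje]; exact (hLXmem _).mp (List.getElem_mem hjX)
        exact hX e he e' he' hadj
      rcases Nat.lt_or_ge i LX.length with hiX | hiY
      · -- i in X, j in Y : the real case
        rw [List.getElem?_append_left hiX, List.getElem?_eq_getElem hiX] at hie
        rw [List.getElem?_append_right hjY,
          List.getElem?_eq_getElem (by omega : j - LX.length < LY.length)] at hje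
        have he : e = LX[i]'hiX := (Option.some_inj.mp hie).symm
        have he' : e' = LY[j - LX.length]'(by omega) := (Option.some_inj.mp hje).symm
        set k : ℕ := j - LX.length with hkdef
        have hkY : k < LY.length := by omega
        have hK : key e ≤ k := hkey_le e k hkY (he' ▸ hadj)
        set K : ℕ := key e with hKdef
        have hKy : K < y := by rw [← hyLen]; omega
        -- i < card of {f ∈ X : key f ≤ K}
        have hcard1 : i + 1 ≤ ({f : Sym2 V | f ∈ X.edgeSet ∧ key f ≤ K}.toFinset).card := by
          have := Finset.card_le_card_of_injOn (fun t => LX.getD t e₀)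
            (s := Finset.range (i + 1))
            (t := {f : Sym2 V | f ∈ X.edgeSet ∧ key f ≤ K}.toFinset) ?_ ?_
          · simpa using this
          · intro t ht
            simp only [Finset.mem_coe, Finset.mem_range] at ht
            have htlen : t < LX.length := by omega
            simp only [Finset.mem_coe, Set.mem_toFinset, Set.mem_setOf_eq]
            rw [List.getD_eq_getElem _ _ htlen]
            refine ⟨(hLXmem _).mp (List.getElem_mem htlen), ?_⟩
            rcases eq_or_lt_of_le (Nat.lt_succ_iff.mp ht) with rfl | hti
            · rw [hKdef, he]
            · have := List.pairwise_iff_getElem.mp hsorted t i htlen hiX hti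
              rw [hKdef, he]; exact this
          · intro t ht t' ht' htt'
            simp only [Finset.coe_range, Set.mem_Iio] at ht ht'
            simp only at htt'
            have htlen : t < LX.length := by omega
            have htlen' : t' < LX.length := by omega
            rw [List.getD_eq_getElem _ _ htlen, List.getD_eq_getElem _ _ htlen'] at htt'
            exact (hLXnodup.getElem_inj_iff).mp htt'
        -- that card is at most the sum of c over range (K+1)
        have hcard2 : ({f : Sym2 V | f ∈ X.edgeSet ∧ key f ≤ K}.toFinset).card
            ≤ ∑ k' ∈ Finset.range (K + 1), c k' := by
          refine le_trans (Finset.card_le_card ?_) (Finset.card_biUnion_le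
            (s := Finset.range (K + 1)) (t := Bk))
          intro f hf
          rw [Set.mem_toFinset] at hf
          obtain ⟨hfX, hfK⟩ := hf
          have hfkey : key f < LY.length := by omega
          rw [Finset.mem_biUnion]
          refine ⟨key f, Finset.mem_range.mpr (by omega), ?_⟩
          rw [hBkdef, Set.mem_toFinset]
          refine ⟨hfX, ?_⟩
          rw [List.getD_eq_getElem _ _ hfkey]
          exact edgesAdj_comm (hkey_adj f hfkey)
        have hs := hsum K hKy
        have hxl : LX.length = x := hxLen
        clear_value K k M
        omega
      · -- both in Y : impossible
        exfalso
        rw [List.getElem?_append_right hiY,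
          List.getElem?_eq_getElem (by omega : i - LX.length < LY.length)] at hie
        rw [List.getElem?_append_right hjY,
          List.getElem?_eq_getElem (by omega : j - LX.length < LY.length)] at hje
        have he : e ∈ Y.edgeSet := by
          rw [← Option.some_inj.mp hie]; exact (hLY.2 _).mp (List.getElem_mem (by omega))
        have he' : e' ∈ Y.edgeSet := by
          rw [← Option.some_inj.mp hje]; exact (hLY.2 _).mp (List.getElem_mem (by omega))
        exact hY e he e' he' hadj
  have hcast : (M : ℤ) ≤ (msList (LX ++ LY) : ℤ) := by exact_mod_cast hmain
  clear_value M
  omega
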